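/- Let X, Y be finite-dimensional Euclidean spaces, f, g ∈ Γ₀(X) with f differentiable and ∇f (1/β)-cocoercive, h ∈ Γ₀(Y), D : X → Y linear, and σ, τ > 0 with 1/τ − σ‖D‖² > β/2. On Z = X × Y define the positive definite operator P(x, y) = ((1/τ)x + D*y, Dx + (1/σ)y) and the inner product ⟨z, z′⟩_P = ⟨z, Pz′⟩, and let A(x, y) = (∂g(x) + D*y, −Dx + ∂h*(y)) and B(x, y) = (∇f(x), 0). Then: (1) the point z̃^{k+1} = (x̃^{k+1}, ỹ^{k+1}) produced by one step of the primal-dual iteration ỹ^{k+1} = prox_{σh*}(y^k + σDx^k), x̃^{k+1} = prox_{τg}(x^k − τ∇f(x^k) − τD*(2ỹ^{k+1} − y^k)) satisfies z̃^{k+1} = (I + P⁻¹A)⁻¹(I − P⁻¹B)(z^k); (2) T₁ = (I + P⁻¹A)⁻¹ is (1/2)-averaged on (Z, ⟨·,·⟩_P), T₂ = I − P⁻¹B is (1/(2κ))-averaged on (Z, ⟨·,·⟩_P) with κ = (1/τ − σ‖D‖²)/β, and T = T₁ ∘ T₂ is (1/δ)-averaged with δ = 2 − 1/(2κ). -/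

import Mathlib

open Filter Topology Set
open scoped InnerProductSpace RealInnerProductSpace Pointwise

noncomputable section

/-- The inertial parameter condition on the extrapolation parameters `αs` and the
relaxation parameters `ρs`. -/
def InertialCond (αs ρs : ℕ → ℝ) : Prop :=
  ∃ α ρ θ δ : ℝ,
    Monotone αs ∧ αs 1 = 0 ∧ (∀ k, 1 ≤ k → 0 ≤ αs k ∧ αs k ≤ α) ∧ 0 ≤ α ∧ α < 1 ∧
    0 < ρ ∧ 0 < θ ∧ 0 < δ ∧
    (α ^ 2 * (1 + α) + α * θ) / (1 - α ^ 2) < δ ∧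
    (∀ k, 1 ≤ k → ρ ≤ ρs k ∧
      ρs k < (δ - α * (α * (1 + α) + α * δ + θ)) / (δ * (1 + α * (1 + α) + α * δ + θ)))

variable {H : Type*} [NormedAddCommGroup H] [InnerProductSpace ℝ H]

/-- `g` is a proper, lower semicontinuous, convex function with values in `(-∞, +∞]`. -/
def Gamma0 (g : H → EReal) : Prop :=
  (∃ x, g x ≠ ⊤) ∧ (∀ x, g x ≠ ⊥) ∧ LowerSemicontinuous g ∧
  ∀ x y : H, ∀ a b : ℝ, 0 ≤ a → 0 ≤ b → a + b = 1 →
    g (a • x + b • y) ≤ (a : EReal) * g x + (b : EReal) * g y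

/-- The Legendre–Fenchel conjugate of `h`. -/
def fenchel (h : H → EReal) (y : H) : EReal :=
  ⨆ x : H, ((⟪y, x⟫_ℝ : ℝ) : EReal) - h x

/-- `p = prox_{τ g}(u)`, i.e. `p` minimizes `w ↦ g w + ‖u - w‖² / (2τ)`. -/
def IsProx (g : H → EReal) (τ : ℝ) (u p : H) : Prop :=
  ∀ w, g p + ((1 / (2 * τ) * ‖u - p‖ ^ 2 : ℝ) : EReal) ≤
    g w + ((1 / (2 * τ) * ‖u - w‖ ^ 2 : ℝ) : EReal)

/-- `p = prox_{S g}(u)` for a positive definite map `S` with inverse `Sinv`, i.e. `p`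
minimizes `w ↦ g w + (1/2) ⟪S⁻¹ (u - w), u - w⟫`. -/
def IsProxOp (g : H → EReal) (Sinv : H →L[ℝ] H) (u p : H) : Prop :=
  ∀ w, g p + ((1 / 2 * ⟪Sinv (u - p), u - p⟫_ℝ : ℝ) : EReal) ≤
    g w + ((1 / 2 * ⟪Sinv (u - w), u - w⟫_ℝ : ℝ) : EReal)

/-- `B` is cocoercive with respect to `Linv = L⁻¹`. -/
def CocoerciveWrt (B : H → H) (Linv : H →L[ℝ] H) : Prop :=
  ∀ x y : H, ⟪Linv (B x - B y), B x - B y⟫_ℝ ≤ ⟪B x - B y, x - y⟫_ℝ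

/-- `L` is a selfadjoint positive definite (bounded linear) map. -/
def PosDefSA (L : H →L[ℝ] H) : Prop :=
  (∀ x y : H, ⟪L x, y⟫_ℝ = ⟪x, L y⟫_ℝ) ∧ ∀ x : H, x ≠ 0 → 0 < ⟪L x, x⟫_ℝ

/-- `Linv` is a two-sided inverse of `L`. -/
def InvPair (L Linv : H →L[ℝ] H) : Prop :=
  (∀ x, L (Linv x) = x) ∧ (∀ x, Linv (L x) = x)

/-- The subdifferential of an extended-real-valued convex function. -/
def subdiff (g : H → EReal) (x : H) : Set H :=
  {u | ∀ z, g x + ((⟪u, z - x⟫_ℝ : ℝ) : EReal) ≤ g z}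

/-- The diagonal operator on `EuclideanSpace ℝ (Fin q)` with diagonal entries `t`. -/
def diagOp {q : ℕ} (t : Fin q → ℝ) :
    EuclideanSpace ℝ (Fin q) →L[ℝ] EuclideanSpace ℝ (Fin q) :=
  LinearMap.toContinuousLinearMap
  { toFun := fun x => (WithLp.toLp 2 (fun i => t i * x i) : EuclideanSpace ℝ (Fin q))
    map_add' := by intro x y; ext i; simp [mul_add]
    map_smul' := by intro c x; ext i; simp [smul_eq_mul] <;> ring }

end

-- auxiliary section to be inserted before the theorem
section AuxLemmas

variable {H : Type*} [NormedAddCommGroup H] [InnerProductSpace ℝ H]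

lemma aux_small_step {a s C : ℝ} (hC : 0 ≤ C)
    (key : ∀ θ : ℝ, 0 < θ → θ ≤ 1 → a ≤ s + θ * C) : a ≤ s := by
  by_contra hcon
  push_neg at hcon
  rcases eq_or_lt_of_le hC with hC0 | hC0
  · have := key 1 one_pos le_rfl
    rw [← hC0] at this; linarith
  · have hθpos : 0 < min 1 ((a - s) / (2 * C)) :=
      lt_min one_pos (div_pos (by linarith) (by linarith))
    have h1 := key _ hθpos (min_le_left _ _)
    have h2 : min 1 ((a - s) / (2 * C)) * C ≤ (a - s) / 2 := by
      calc min 1 ((a - s) / (2 * C)) * C ≤ ((a - s) / (2 * C)) * C :=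
            mul_le_mul_of_nonneg_right (min_le_right _ _) (le_of_lt hC0)
        _ = (a - s) / 2 := by field_simp
    linarith

theorem prox_subdiff (g : H → EReal) (hproper : ∃ x, g x ≠ ⊤) (hbot : ∀ x, g x ≠ ⊥)
    (hconv : ∀ x y : H, ∀ a b : ℝ, 0 ≤ a → 0 ≤ b → a + b = 1 →
      g (a • x + b • y) ≤ (a : EReal) * g x + (b : EReal) * g y)
    {t : ℝ} (ht : 0 < t) {u p : H} (hp : IsProx g t u p) :
    t⁻¹ • (u - p) ∈ subdiff g p := by
  obtain ⟨x0, hx0⟩ := hproper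
  obtain ⟨c0, hc0⟩ : ∃ c : ℝ, g x0 = (c : EReal) := by
    lift g x0 to ℝ using ⟨hx0, hbot x0⟩ with c; exact ⟨c, rfl⟩
  have hptop : g p ≠ ⊤ := by
    intro htop
    have := hp x0
    rw [htop, hc0, ← EReal.coe_add, EReal.top_add_of_ne_bot (EReal.coe_ne_bot _)] at this
    exact (EReal.coe_ne_top _) (top_le_iff.mp this)
  obtain ⟨r, hr⟩ : ∃ r : ℝ, g p = (r : EReal) := by
    lift g p to ℝ using ⟨hptop, hbot p⟩ with r
    exact ⟨r, rfl⟩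
  intro z
  by_cases hz : g z = ⊤
  · rw [hz]; exact le_top
  obtain ⟨s, hs⟩ : ∃ s : ℝ, g z = (s : EReal) := by
    lift g z to ℝ using ⟨hz, hbot z⟩ with s
    exact ⟨s, rfl⟩
  rw [hr, hs]
  rw [← EReal.coe_add, EReal.coe_le_coe_iff]
  have key : ∀ θ : ℝ, 0 < θ → θ ≤ 1 →
      r + t⁻¹ * ⟪u - p, z - p⟫_ℝ ≤ s + θ * (1 / (2 * t) * ‖z - p‖ ^ 2) := by
    intro θ hθ hθ1
    set w := (1 - θ) • p + θ • z with hw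
    have hcv := hconv p z (1 - θ) θ (by linarith) (le_of_lt hθ) (by ring)
    rw [hr, hs] at hcv
    have hcv' : g w ≤ (((1 - θ) * r + θ * s : ℝ) : EReal) := by
      rw [← hw] at hcv
      calc g w ≤ ((1 - θ : ℝ) : EReal) * (r : EReal) + (θ : ℝ) * (s : EReal) := hcv
        _ = (((1 - θ) * r + θ * s : ℝ) : EReal) := by
            rw [← EReal.coe_mul, ← EReal.coe_mul, ← EReal.coe_add]
    have hpw := hp w
    rw [hr] at hpw
    have hpw2 : ((r + 1 / (2 * t) * ‖u - p‖ ^ 2 : ℝ) : EReal) ≤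
        (((1 - θ) * r + θ * s + 1 / (2 * t) * ‖u - w‖ ^ 2 : ℝ) : EReal) := by
      rw [EReal.coe_add, EReal.coe_add]
      exact le_trans hpw (add_le_add_left hcv' _)
    rw [EReal.coe_le_coe_iff] at hpw2
    have hw2 : u - w = (u - p) - θ • (z - p) := by
      rw [hw]; module
    have hnorm : ‖u - w‖ ^ 2 = ‖u - p‖ ^ 2 - 2 * θ * ⟪u - p, z - p⟫_ℝ + θ ^ 2 * ‖z - p‖ ^ 2 := by
      rw [hw2]
      rw [norm_sub_sq_real]
      rw [real_inner_smul_right, norm_smul]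
      simp [mul_pow, abs_of_pos hθ]
      ring
    rw [hnorm] at hpw2
    have ht' : (0:ℝ) < 1 / (2 * t) := by positivity
    have h3 : θ * r + θ * (2 * (1 / (2 * t)) * ⟪u - p, z - p⟫_ℝ) ≤
        θ * s + θ * (θ * (1 / (2 * t) * ‖z - p‖ ^ 2)) := by nlinarith
    have h5 : θ * (r + t⁻¹ * ⟪u - p, z - p⟫_ℝ) ≤
        θ * (s + θ * (1 / (2 * t) * ‖z - p‖ ^ 2)) := by
      calc θ * (r + t⁻¹ * ⟪u - p, z - p⟫_ℝ)
          = θ * r + θ * (2 * (1 / (2 * t)) * ⟪u - p, z - p⟫_ℝ) := by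
            field_simp
        _ ≤ θ * s + θ * (θ * (1 / (2 * t) * ‖z - p‖ ^ 2)) := h3
        _ = θ * (s + θ * (1 / (2 * t) * ‖z - p‖ ^ 2)) := by ring
    exact le_of_mul_le_mul_left h5 hθ
  have hC : (0:ℝ) ≤ 1 / (2 * t) * ‖z - p‖ ^ 2 := by positivity
  have final : r + t⁻¹ * ⟪u - p, z - p⟫_ℝ ≤ s := aux_small_step hC key
  calc r + ⟪t⁻¹ • (u - p), z - p⟫_ℝ = r + t⁻¹ * ⟪u - p, z - p⟫_ℝ := by
        rw [real_inner_smul_left]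
    _ ≤ s := final

theorem subdiff_mono (g : H → EReal) (hproper : ∃ x, g x ≠ ⊤) (hbot : ∀ x, g x ≠ ⊥)
    {x y u v : H} (hu : u ∈ subdiff g x) (hv : v ∈ subdiff g y) :
    0 ≤ ⟪u - v, x - y⟫_ℝ := by
  obtain ⟨x0, hx0⟩ := hproper
  obtain ⟨c0, hc0⟩ : ∃ c : ℝ, g x0 = (c : EReal) := by
    lift g x0 to ℝ using ⟨hx0, hbot x0⟩ with c; exact ⟨c, rfl⟩
  have hxtop : g x ≠ ⊤ := by
    intro htop
    have := hu x0
    rw [htop, hc0, EReal.top_add_of_ne_bot (EReal.coe_ne_bot _)] at this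
    exact (EReal.coe_ne_top c0) (top_le_iff.mp this)
  have hytop : g y ≠ ⊤ := by
    intro htop
    have := hv x0
    rw [htop, hc0, EReal.top_add_of_ne_bot (EReal.coe_ne_bot _)] at this
    exact (EReal.coe_ne_top c0) (top_le_iff.mp this)
  obtain ⟨r, hr⟩ : ∃ r : ℝ, g x = (r : EReal) := by
    lift g x to ℝ using ⟨hxtop, hbot x⟩ with r; exact ⟨r, rfl⟩
  obtain ⟨s, hs⟩ : ∃ s : ℝ, g y = (s : EReal) := by
    lift g y to ℝ using ⟨hytop, hbot y⟩ with s; exact ⟨s, rfl⟩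
  have h1 := hu y; rw [hr, hs, ← EReal.coe_add, EReal.coe_le_coe_iff] at h1
  have h2 := hv x; rw [hr, hs, ← EReal.coe_add, EReal.coe_le_coe_iff] at h2
  have h3 : ⟪u, y - x⟫_ℝ + ⟪v, x - y⟫_ℝ ≤ 0 := by linarith
  have hrw : ⟪u - v, x - y⟫_ℝ = -(⟪u, y - x⟫_ℝ + ⟪v, x - y⟫_ℝ) := by
    rw [inner_sub_left]
    have hyx : (y - x) = -(x - y) := by abel
    rw [hyx, inner_neg_right]
    ring
  rw [hrw]; linarith

theorem fenchel_ne_bot (h : H → EReal) (hproper : ∃ x, h x ≠ ⊤) (hbot : ∀ x, h x ≠ ⊥)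
    (y : H) : fenchel h y ≠ ⊥ := by
  obtain ⟨x0, hx0⟩ := hproper
  obtain ⟨c0, hc0⟩ : ∃ c : ℝ, h x0 = (c : EReal) := by
    lift h x0 to ℝ using ⟨hx0, hbot x0⟩ with c; exact ⟨c, rfl⟩
  have hle : ((⟪y, x0⟫_ℝ - c0 : ℝ) : EReal) ≤ fenchel h y := by
    have := le_iSup (fun x => ((⟪y, x⟫_ℝ : ℝ) : EReal) - h x) x0
    rw [hc0] at this
    rwa [EReal.coe_sub]
  intro hb
  rw [hb, le_bot_iff] at hle
  exact EReal.coe_ne_bot _ hle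

theorem fenchel_convex (h : H → EReal) (hbot : ∀ x, h x ≠ ⊥) :
    ∀ y1 y2 : H, ∀ a b : ℝ, 0 ≤ a → 0 ≤ b → a + b = 1 →
      fenchel h (a • y1 + b • y2) ≤ (a : EReal) * fenchel h y1 + (b : EReal) * fenchel h y2 := by
  intro y1 y2 a b ha hb hab
  apply iSup_le
  intro x
  have h1 : ((⟪y1, x⟫_ℝ : ℝ) : EReal) - h x ≤ fenchel h y1 :=
    le_iSup (fun x => ((⟪y1, x⟫_ℝ : ℝ) : EReal) - h x) x
  have h2 : ((⟪y2, x⟫_ℝ : ℝ) : EReal) - h x ≤ fenchel h y2 :=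
    le_iSup (fun x => ((⟪y2, x⟫_ℝ : ℝ) : EReal) - h x) x
  by_cases hx : h x = ⊤
  · rw [hx]
    have hbot1 : ((⟪a • y1 + b • y2, x⟫_ℝ : ℝ) : EReal) - ⊤ = ⊥ := EReal.sub_top _
    rw [hbot1]
    exact bot_le
  obtain ⟨m, hm⟩ : ∃ m : ℝ, h x = (m : EReal) := by
    lift h x to ℝ using ⟨hx, hbot x⟩ with m; exact ⟨m, rfl⟩
  rw [hm] at h1 h2 ⊢
  rw [← EReal.coe_sub] at h1 h2 ⊢
  have key : ((⟪a • y1 + b • y2, x⟫_ℝ - m : ℝ) : EReal) =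
      (a : EReal) * ((⟪y1, x⟫_ℝ - m : ℝ) : EReal) + (b : EReal) * ((⟪y2, x⟫_ℝ - m : ℝ) : EReal) := by
    rw [← EReal.coe_mul, ← EReal.coe_mul, ← EReal.coe_add]
    congr 1
    rw [inner_add_left, real_inner_smul_left, real_inner_smul_left]
    have hm' : a * m + b * m = m := by rw [← add_mul, hab, one_mul]
    linarith
  rw [key]
  gcongr

theorem fenchel_proper [CompleteSpace H] (h : H → EReal) (hproper : ∃ x, h x ≠ ⊤)
    (hbot : ∀ x, h x ≠ ⊥) (hlsc : LowerSemicontinuous h)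
    (hconv : ∀ x y : H, ∀ a b : ℝ, 0 ≤ a → 0 ≤ b → a + b = 1 →
      h (a • x + b • y) ≤ (a : EReal) * h x + (b : EReal) * h y) :
    ∃ y : H, fenchel h y ≠ ⊤ := by
  obtain ⟨x0, hx0⟩ := hproper
  obtain ⟨r0, hr0⟩ : ∃ c : ℝ, h x0 = (c : EReal) := by
    lift h x0 to ℝ using ⟨hx0, hbot x0⟩ with c; exact ⟨c, rfl⟩
  set S : Set (H × ℝ) := {p | h p.1 ≤ (p.2 : EReal)} with hS
  have hSconv : Convex ℝ S := by
    rintro ⟨x, r⟩ hxr ⟨y, s⟩ hys a b ha hb hab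
    simp only [hS, mem_setOf_eq] at hxr hys ⊢
    have hxtop : h x ≠ ⊤ := fun hc => by
      rw [hc] at hxr; exact EReal.coe_ne_top r (top_le_iff.mp hxr)
    have hytop : h y ≠ ⊤ := fun hc => by
      rw [hc] at hys; exact EReal.coe_ne_top s (top_le_iff.mp hys)
    obtain ⟨mx, hmx⟩ : ∃ m : ℝ, h x = (m : EReal) := by
      lift h x to ℝ using ⟨hxtop, hbot x⟩ with m; exact ⟨m, rfl⟩
    obtain ⟨my, hmy⟩ : ∃ m : ℝ, h y = (m : EReal) := by
      lift h y to ℝ using ⟨hytop, hbot y⟩ with m; exact ⟨m, rfl⟩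
    have hcv := hconv x y a b ha hb hab
    rw [hmx, hmy] at hcv
    have h2 : h (a • x + b • y) ≤ ((a * mx + b * my : ℝ) : EReal) := by
      rw [EReal.coe_add, EReal.coe_mul, EReal.coe_mul]; exact hcv
    have hpt : a • ((x, r) : H × ℝ) + b • (y, s) = (a • x + b • y, a * r + b * s) := by
      simp [Prod.ext_iff, smul_eq_mul]
    rw [hpt]
    dsimp only
    refine le_trans h2 ?_
    rw [EReal.coe_le_coe_iff]
    rw [hmx, EReal.coe_le_coe_iff] at hxr
    rw [hmy, EReal.coe_le_coe_iff] at hys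
    have := add_le_add (mul_le_mul_of_nonneg_left hxr ha) (mul_le_mul_of_nonneg_left hys hb)
    linarith
  have hSclosed : IsClosed S := by
    rw [← isOpen_compl_iff, isOpen_iff_mem_nhds]
    rintro ⟨x, r⟩ hp
    simp only [hS, mem_compl_iff, mem_setOf_eq, not_le] at hp
    obtain ⟨c, hrc, hch⟩ : ∃ c : ℝ, r < c ∧ (c : EReal) < h x := by
      by_cases htop : h x = ⊤
      · exact ⟨r + 1, by linarith, by rw [htop]; exact EReal.coe_lt_top _⟩
      · obtain ⟨m, hm⟩ : ∃ m : ℝ, h x = (m : EReal) := by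
          lift h x to ℝ using ⟨htop, hbot x⟩ with m; exact ⟨m, rfl⟩
        rw [hm] at hp ⊢
        rw [EReal.coe_lt_coe_iff] at hp
        exact ⟨(r + m) / 2, by linarith, by rw [EReal.coe_lt_coe_iff]; linarith⟩
    have h1 : ∀ᶠ q : H × ℝ in 𝓝 (x, r), (c : EReal) < h q.1 :=
      (continuous_fst.tendsto (x, r)).eventually (hlsc x (c : EReal) hch)
    have h2' : ∀ᶠ t : ℝ in 𝓝 r, t < c := Filter.Tendsto.eventually_lt_const hrc tendsto_id
    have h2 : ∀ᶠ q : H × ℝ in 𝓝 (x, r), q.2 < c :=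
      (continuous_snd.tendsto (x, r)).eventually h2'
    have h3 : ∀ᶠ q : H × ℝ in 𝓝 (x, r), q ∈ Sᶜ := by
      filter_upwards [h1, h2] with q hq1 hq2
      simp only [hS, mem_compl_iff, mem_setOf_eq, not_le]
      exact lt_trans (EReal.coe_lt_coe_iff.mpr hq2) hq1
    exact h3
  have hz : ((x0, r0 - 1) : H × ℝ) ∉ S := by
    simp only [hS, mem_setOf_eq, not_le, hr0]
    exact EReal.coe_lt_coe_iff.mpr (by linarith)
  obtain ⟨F, u, hFS, hFz⟩ := geometric_hahn_banach_closed_point hSconv hSclosed hz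
  have hFdec : ∀ (x : H) (r : ℝ), F (x, r) = F (x, 0) + r * F (0, 1) := by
    intro x r
    have hxr : ((x, r) : H × ℝ) = (x, 0) + r • ((0 : H), (1 : ℝ)) := by
      simp [Prod.ext_iff]
    rw [hxr, map_add, map_smul, smul_eq_mul]
  set sc := F ((0 : H), (1 : ℝ)) with hscdef
  have hmemS : ∀ n : ℕ, ((x0, r0 + n) : H × ℝ) ∈ S := by
    intro n
    simp only [hS, mem_setOf_eq, hr0]
    exact EReal.coe_le_coe_iff.mpr (by linarith [Nat.cast_nonneg (α := ℝ) n])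
  have hsc_le : sc ≤ 0 := by
    by_contra hpos
    push_neg at hpos
    obtain ⟨n, hn⟩ := exists_nat_gt ((u - F (x0, 0) - r0 * sc) / sc)
    have hFn := hFS _ (hmemS n)
    rw [hFdec] at hFn
    have hgt : u - F (x0, 0) - r0 * sc < (n : ℝ) * sc := (div_lt_iff₀ hpos).mp hn
    nlinarith
  have h0 := hFS _ (hmemS 0)
  rw [hFdec] at h0
  rw [hFdec] at hFz
  push_cast at h0
  have hsc_neg : sc < 0 := by
    rcases lt_or_eq_of_le hsc_le with hlt | heq
    · exact hlt
    · exfalso; rw [hscdef] at h0 hFz; rw [hscdef] at heq; rw [heq] at h0 hFz; linarith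
  set φ : H →L[ℝ] ℝ := F.comp (ContinuousLinearMap.inl ℝ H ℝ) with hφdef
  set ξ := (InnerProductSpace.toDual ℝ H).symm φ with hξdef
  have hξ : ∀ x : H, ⟪ξ, x⟫_ℝ = F (x, 0) := by
    intro x
    rw [hξdef, InnerProductSpace.toDual_symm_apply]
    simp [hφdef]
  refine ⟨(-(1/sc)) • ξ, ?_⟩
  have hbd : fenchel (H := H) h ((-(1/sc)) • ξ) ≤ ((-(u/sc) : ℝ) : EReal) := by
    apply iSup_le
    intro x
    by_cases hx : h x = ⊤
    · rw [hx, EReal.sub_top]; exact bot_le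
    obtain ⟨m, hm⟩ : ∃ m : ℝ, h x = (m : EReal) := by
      lift h x to ℝ using ⟨hx, hbot x⟩ with m; exact ⟨m, rfl⟩
    rw [hm, ← EReal.coe_sub, EReal.coe_le_coe_iff]
    have h1 := hFS (x, m) (by simp only [hS, mem_setOf_eq, hm]; exact le_refl _)
    rw [hFdec] at h1
    have hy0 : ⟪(-(1/sc)) • ξ, x⟫_ℝ = -(1/sc) * F (x, 0) := by
      rw [real_inner_smul_left, hξ]
    rw [hy0]
    have key2 : (u - F (x, 0)) / sc ≤ m := by
      rw [div_le_iff_of_neg hsc_neg]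
      linarith
    have e1 : (u - F (x, 0)) / sc = u / sc - 1 / sc * F (x, 0) := by ring
    linarith
  intro htop
  rw [htop] at hbd
  exact (EReal.coe_ne_top _) (top_le_iff.mp hbd)

lemma quad_aux {τ σ nD a b i : ℝ} (hτ : 0 < τ) (hσ : 0 < σ) (hD : σ * nD ^ 2 < 1 / τ)
    (hi : -(nD * a * b) ≤ i) : 0 ≤ τ⁻¹ * a ^ 2 + 2 * i + σ⁻¹ * b ^ 2 := by
  have hστ : σ * τ * nD ^ 2 ≤ 1 := by
    have h1 : (1 / τ) * τ = 1 := by field_simp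
    nlinarith
  have key : 0 ≤ σ * a ^ 2 + 2 * (τ * σ) * i + τ * b ^ 2 := by
    nlinarith [mul_nonneg hσ.le (sq_nonneg (a - τ * nD * b)),
      mul_nonneg (mul_nonneg hτ.le (sq_nonneg b)) (by linarith : (0:ℝ) ≤ 1 - σ * τ * nD ^ 2),
      mul_pos hτ hσ]
  have final : τ⁻¹ * a ^ 2 + 2 * i + σ⁻¹ * b ^ 2 =
      (τ * σ)⁻¹ * (σ * a ^ 2 + 2 * (τ * σ) * i + τ * b ^ 2) := by
    field_simp
  rw [final]
  exact mul_nonneg (inv_nonneg.mpr (mul_pos hτ hσ).le) key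

end AuxLemmas

/-- `T` is `a`-averaged with respect to the (semi-)inner product `z, w ↦ ip z (P w)`. -/
def AveragedWrt {Z : Type*} [AddCommGroup Z] (ip : Z → Z → ℝ) (P : Z → Z) (a : ℝ)
    (T : Z → Z) : Prop :=
  ∀ z w : Z, ip (T z - T w) (P (T z - T w)) ≤
    ip (z - w) (P (z - w)) -
      ((1 - a) / a) * ip ((z - T z) - (w - T w)) (P ((z - T z) - (w - T w)))

set_option maxHeartbeats 1000000 in
theorem primal_dual_forward_backward_structure
    {X Y : Type*} [NormedAddCommGroup X] [InnerProductSpace ℝ X] [FiniteDimensional ℝ X]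
    [NormedAddCommGroup Y] [InnerProductSpace ℝ Y] [FiniteDimensional ℝ Y]
    (f : X → ℝ) (fgrad : X → X) (g : X → EReal) (h : Y → EReal) (D : X →L[ℝ] Y)
    (hf_conv : ConvexOn ℝ Set.univ f)
    (hf_grad : ∀ x, HasGradientAt f (fgrad x) x)
    (hg : Gamma0 g) (hh : Gamma0 h)
    (β : ℝ) (hβ : 0 < β)
    (hcoco : ∀ x x' : X, (1 / β) * ‖fgrad x - fgrad x'‖ ^ 2 ≤ ⟪fgrad x - fgrad x', x - x'⟫_ℝ)
    (σ τ : ℝ) (hσ : 0 < σ) (hτ : 0 < τ)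
    (hstep : β / 2 < 1 / τ - σ * ‖D‖ ^ 2)
    -- the inner product on `Z = X × Y` :
    (ip : X × Y → X × Y → ℝ) (hip : ∀ z w : X × Y, ip z w = ⟪z.1, w.1⟫_ℝ + ⟪z.2, w.2⟫_ℝ)
    -- the preconditioner `P`, its inverse, and the operators `A` and `B` :
    (P Pinv : X × Y → X × Y)
    (hP : ∀ z : X × Y, P z =
      (τ⁻¹ • z.1 + (ContinuousLinearMap.adjoint D) z.2, D z.1 + σ⁻¹ • z.2))
    (hPinv : (∀ z, P (Pinv z) = z) ∧ ∀ z, Pinv (P z) = z)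
    (A : X × Y → Set (X × Y))
    (hA : ∀ z : X × Y, A z = {w | ∃ u ∈ subdiff g z.1, ∃ v ∈ subdiff (fenchel h) z.2,
      w = (u + (ContinuousLinearMap.adjoint D) z.2, v - D z.1)})
    (B : X × Y → X × Y) (hB : ∀ z : X × Y, B z = (fgrad z.1, 0))
    (κ δ : ℝ) (hκ : κ = (1 / τ - σ * ‖D‖ ^ 2) / β) (hδ : δ = 2 - 1 / (2 * κ)) :
    -- (1) one step of the primal-dual iteration is a resolvent step
    --     `z̃^{k+1} = (I + P⁻¹A)⁻¹ (I - P⁻¹B) z^k`, i.e.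
    --     `P z^k - B z^k - P z̃^{k+1} ∈ A z̃^{k+1}` :
    (∀ (xk : X) (yk : Y) (xt1 : X) (yt1 : Y),
      IsProx (fenchel h) σ (yk + σ • D xk) yt1 →
      IsProx g τ (xk - τ • fgrad xk -
        τ • (ContinuousLinearMap.adjoint D) ((2 : ℝ) • yt1 - yk)) xt1 →
      P (xk, yk) - B (xk, yk) - P (xt1, yt1) ∈ A (xt1, yt1)) ∧
    -- (2) `T₁ = (I + P⁻¹A)⁻¹` is `1/2`-averaged in `(Z, ⟪·,·⟫_P)` :
    (∀ T₁ : X × Y → X × Y, (∀ w, P w - P (T₁ w) ∈ A (T₁ w)) →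
      AveragedWrt ip P (1 / 2) T₁) ∧
    -- `T₂ = I - P⁻¹B` is `1/(2κ)`-averaged in `(Z, ⟪·,·⟫_P)` :
    AveragedWrt ip P (1 / (2 * κ)) (fun z => z - Pinv (B z)) ∧
    -- `T = T₁ ∘ T₂` is `1/δ`-averaged in `(Z, ⟪·,·⟫_P)` :
    (∀ T₁ : X × Y → X × Y, (∀ w, P w - P (T₁ w) ∈ A (T₁ w)) →
      AveragedWrt ip P (1 / δ) (fun z => T₁ (z - Pinv (B z)))) := by
  obtain ⟨hg_proper, hg_bot, hg_lsc, hg_conv⟩ := hg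
  obtain ⟨hh_proper, hh_bot, hh_lsc, hh_conv⟩ := hh
  have hF_bot : ∀ y, fenchel h y ≠ ⊥ := fenchel_ne_bot h hh_proper hh_bot
  have hF_conv := fenchel_convex h hh_bot
  have hF_proper : ∃ y, fenchel h y ≠ ⊤ := fenchel_proper h hh_proper hh_bot hh_lsc hh_conv
  set m : ℝ := 1 / τ - σ * ‖D‖ ^ 2 with hmdef
  have hm0 : 0 < m := lt_trans (by positivity) hstep
  have hκm : κ = m / β := hκ
  have hκpos : 0 < κ := by rw [hκm]; exact div_pos hm0 hβ
  have hκhalf : 1 / 2 < κ := by rw [hκm]; rw [lt_div_iff₀ hβ]; linarith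
  have hadj : ∀ (x : X) (y' : Y),
      ⟪x, (ContinuousLinearMap.adjoint D) y'⟫_ℝ = ⟪D x, y'⟫_ℝ := by
    intro x y'
    rw [ContinuousLinearMap.adjoint_inner_right]
  have hQ : ∀ u v : X × Y, ip u (P v) =
      τ⁻¹ * ⟪u.1, v.1⟫_ℝ + ⟪D u.1, v.2⟫_ℝ + ⟪D v.1, u.2⟫_ℝ + σ⁻¹ * ⟪u.2, v.2⟫_ℝ := by
    intro u v
    rw [hip, hP]
    dsimp only
    rw [inner_add_right, inner_add_right, real_inner_smul_right, real_inner_smul_right, hadj]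
    rw [real_inner_comm u.2 (D v.1)]
    ring
  have hQsym : ∀ u v : X × Y, ip u (P v) = ip v (P u) := by
    intro u v
    rw [hQ, hQ]
    rw [real_inner_comm u.1 v.1, real_inner_comm u.2 v.2]
    ring
  have hQadd_l : ∀ u v w : X × Y, ip (u + v) (P w) = ip u (P w) + ip v (P w) := by
    intro u v w
    rw [hQ, hQ, hQ]
    simp only [Prod.fst_add, Prod.snd_add, map_add, inner_add_left, inner_add_right]
    ring
  have hQadd_r : ∀ u v w : X × Y, ip u (P (v + w)) = ip u (P v) + ip u (P w) := by
    intro u v w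
    rw [hQ, hQ, hQ]
    simp only [Prod.fst_add, Prod.snd_add, map_add, inner_add_left, inner_add_right]
    ring
  have hQsub_l : ∀ u v w : X × Y, ip (u - v) (P w) = ip u (P w) - ip v (P w) := by
    intro u v w
    rw [hQ, hQ, hQ]
    simp only [Prod.fst_sub, Prod.snd_sub, map_sub, inner_sub_left, inner_sub_right]
    ring
  have hQsub_r : ∀ u v w : X × Y, ip u (P (v - w)) = ip u (P v) - ip u (P w) := by
    intro u v w
    rw [hQ, hQ, hQ]
    simp only [Prod.fst_sub, Prod.snd_sub, map_sub, inner_sub_left, inner_sub_right]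
    ring
  have hQsmul_l : ∀ (c : ℝ) (u v : X × Y), ip (c • u) (P v) = c * ip u (P v) := by
    intro c u v
    rw [hQ, hQ]
    simp only [Prod.smul_fst, Prod.smul_snd, map_smul, real_inner_smul_left,
      real_inner_smul_right]
    ring
  have hQsmul_r : ∀ (c : ℝ) (u v : X × Y), ip u (P (c • v)) = c * ip u (P v) := by
    intro c u v
    rw [hQ, hQ]
    simp only [Prod.smul_fst, Prod.smul_snd, map_smul, real_inner_smul_left,
      real_inner_smul_right]
    ring
  have hQpos : ∀ u : X × Y, 0 ≤ ip u (P u) := by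
    intro u
    rw [hQ]
    have h1 := abs_real_inner_le_norm (D u.1) u.2
    have h2 : ‖D u.1‖ * ‖u.2‖ ≤ ‖D‖ * ‖u.1‖ * ‖u.2‖ :=
      mul_le_mul_of_nonneg_right (D.le_opNorm u.1) (norm_nonneg _)
    have hi : -(‖D‖ * ‖u.1‖ * ‖u.2‖) ≤ ⟪D u.1, u.2⟫_ℝ := by
      have h3 := neg_abs_le ⟪D u.1, u.2⟫_ℝ
      linarith
    have h4 := quad_aux hτ hσ (show σ * ‖D‖ ^ 2 < 1 / τ by linarith) hi
    rw [real_inner_self_eq_norm_sq, real_inner_self_eq_norm_sq]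
    linarith
  have hexp_sq : ∀ (c : ℝ) (e dd : X × Y), ip (c • e - dd) (P (c • e - dd)) =
      c ^ 2 * ip e (P e) - 2 * c * ip e (P dd) + ip dd (P dd) := by
    intro c e dd
    rw [hQ, hQ, hQ, hQ]
    simp only [Prod.fst_sub, Prod.snd_sub, Prod.smul_fst, Prod.smul_snd, map_sub, map_smul,
      inner_sub_left, inner_sub_right, inner_add_left, inner_add_right, real_inner_smul_left,
      real_inner_smul_right]
    simp only [real_inner_comm dd.1 e.1, real_inner_comm dd.2 e.2]
    ring
  have hexp_sub : ∀ e dd : X × Y, ip (e - dd) (P (e - dd)) =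
      ip e (P e) - 2 * ip e (P dd) + ip dd (P dd) := by
    intro e dd
    rw [hQ, hQ, hQ, hQ]
    simp only [Prod.fst_sub, Prod.snd_sub, map_sub, inner_sub_left, inner_sub_right]
    simp only [real_inner_comm dd.1 e.1, real_inner_comm dd.2 e.2]
    ring
  have hexp_add : ∀ e dd : X × Y, ip (e + dd) (P (e + dd)) =
      ip e (P e) + 2 * ip e (P dd) + ip dd (P dd) := by
    intro e dd
    rw [hQ, hQ, hQ, hQ]
    simp only [Prod.fst_add, Prod.snd_add, map_add, inner_add_left, inner_add_right]
    simp only [real_inner_comm dd.1 e.1, real_inner_comm dd.2 e.2]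
    ring
  have hPsub : ∀ a b : X × Y, P (a - b) = P a - P b := by
    intro a b
    rw [hP, hP, hP]
    rw [Prod.ext_iff]
    constructor
    · simp only [Prod.fst_sub, Prod.snd_sub, map_sub, smul_sub]
      abel
    · simp only [Prod.fst_sub, Prod.snd_sub, map_sub, smul_sub]
      abel
  -- Part 2
  have part2 : ∀ T₁ : X × Y → X × Y, (∀ w, P w - P (T₁ w) ∈ A (T₁ w)) →
      AveragedWrt ip P (1 / 2) T₁ := by
    intro T₁ hT₁ z w
    have hz' := hT₁ z
    have hw' := hT₁ w
    rw [hA] at hz' hw'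
    obtain ⟨u, hu, v, hv, huv⟩ := hz'
    obtain ⟨u', hu', v', hv', huv'⟩ := hw'
    set p := T₁ z with hpdef
    set q := T₁ w with hqdef
    have mono1 : 0 ≤ ⟪u - u', p.1 - q.1⟫_ℝ := subdiff_mono g hg_proper hg_bot hu hu'
    have mono2 : 0 ≤ ⟪v - v', p.2 - q.2⟫_ℝ :=
      subdiff_mono (fenchel h) hF_proper hF_bot hv hv'
    have hkey : 0 ≤ ip (p - q) (P ((z - w) - (p - q))) := by
      have he : (z - w) - (p - q) = (z - p) - (w - q) := by abel
      have hPc : P ((z - p) - (w - q)) = (P z - P p) - (P w - P q) := by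
        rw [hPsub, hPsub, hPsub]
      rw [he, hPc, huv, huv', hip]
      have hfst : ((u + (ContinuousLinearMap.adjoint D) p.2, v - D p.1) -
          (u' + (ContinuousLinearMap.adjoint D) q.2, v' - D q.1) : X × Y).1
          = (u - u') + (ContinuousLinearMap.adjoint D) (p.2 - q.2) := by
        simp only [Prod.fst_sub, map_sub]
        abel
      have hsnd : ((u + (ContinuousLinearMap.adjoint D) p.2, v - D p.1) -
          (u' + (ContinuousLinearMap.adjoint D) q.2, v' - D q.1) : X × Y).2
          = (v - v') - D (p.1 - q.1) := by
        simp only [Prod.snd_sub, map_sub]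
        abel
      rw [hfst, hsnd]
      simp only [Prod.fst_sub, Prod.snd_sub, inner_add_right, inner_sub_right, hadj]
      have c1 : ⟪p.2 - q.2, D (p.1 - q.1)⟫_ℝ = ⟪D (p.1 - q.1), p.2 - q.2⟫_ℝ :=
        real_inner_comm _ _
      have c2 : ⟪u - u', p.1 - q.1⟫_ℝ = ⟪p.1 - q.1, u⟫_ℝ - ⟪p.1 - q.1, u'⟫_ℝ := by
        rw [inner_sub_left, real_inner_comm u, real_inner_comm u']
      have c3 : ⟪v - v', p.2 - q.2⟫_ℝ = ⟪p.2 - q.2, v⟫_ℝ - ⟪p.2 - q.2, v'⟫_ℝ := by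
        rw [inner_sub_left, real_inner_comm v, real_inner_comm v']
      have c4 : ⟪p.2 - q.2, D (p.1 - q.1)⟫_ℝ
          = ⟪D (p.1 - q.1), p.2⟫_ℝ - ⟪D (p.1 - q.1), q.2⟫_ℝ := by
        rw [real_inner_comm, inner_sub_right]
      have c5 : ⟪D (p.1 - q.1), p.2 - q.2⟫_ℝ
          = ⟪D (p.1 - q.1), p.2⟫_ℝ - ⟪D (p.1 - q.1), q.2⟫_ℝ := inner_sub_right _ _ _
      linarith
    have hexp : ip (z - w) (P (z - w)) =
        ip (p - q) (P (p - q)) + 2 * ip (p - q) (P ((z - w) - (p - q)))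
          + ip ((z - w) - (p - q)) (P ((z - w) - (p - q))) := by
      have h1 : (z : X × Y) - w = (p - q) + ((z - w) - (p - q)) := by abel
      calc ip (z - w) (P (z - w))
          = ip ((p - q) + ((z - w) - (p - q))) (P ((p - q) + ((z - w) - (p - q)))) := by
            rw [← h1]
        _ = _ := by
            rw [hQadd_l, hQadd_r, hQadd_r, hQsym ((z - w) - (p - q)) (p - q)]
            ring
    rw [show ((1:ℝ) - 1 / 2) / (1 / 2) = 1 from by norm_num]
    have he2 : (z - p) - (w - q) = (z - w) - (p - q) := by abel
    rw [he2, hexp]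
    linarith
  -- Part 3
  have part3 : AveragedWrt ip P (1 / (2 * κ)) (fun z => z - Pinv (B z)) := by
    intro z w
    dsimp only
    set d : X × Y := Pinv (B z) - Pinv (B w) with hddef
    have e2 : (z - (z - Pinv (B z))) - (w - (w - Pinv (B w))) = d := by
      rw [hddef]; abel
    have e3 : (z - Pinv (B z)) - (w - Pinv (B w)) = (z - w) - d := by
      rw [hddef]; abel
    rw [e2, e3]
    have hκne : (2 : ℝ) * κ ≠ 0 := by positivity
    have hcoef : ((1:ℝ) - 1 / (2 * κ)) / (1 / (2 * κ)) = 2 * κ - 1 := by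
      field_simp
    rw [hcoef]
    have hPd : P d = (fgrad z.1 - fgrad w.1, 0) := by
      rw [hddef, hPsub, hPinv.1 (B z), hPinv.1 (B w), hB, hB]
      rw [Prod.ext_iff]
      constructor
      · simp
      · simp
    set b : X := fgrad z.1 - fgrad w.1 with hbdef
    have hQed : ip (z - w) (P d) = ⟪z.1 - w.1, b⟫_ℝ := by
      rw [hPd, hip]
      simp only [Prod.fst_sub, Prod.snd_sub]
      rw [inner_zero_right]
      ring
    have hQed_ge : 1 / β * ‖b‖ ^ 2 ≤ ip (z - w) (P d) := by
      rw [hQed, real_inner_comm]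
      exact hcoco z.1 w.1
    have hPdc := hP d
    rw [hPd, Prod.mk.injEq] at hPdc
    obtain ⟨hPd1, hPd2⟩ := hPdc
    -- hPd1 : b = τ⁻¹ • d.1 + D* d.2 ;  hPd2 : 0 = D d.1 + σ⁻¹ • d.2
    have hd2' : d.2 = -(σ • D d.1) := by
      have h1 : σ⁻¹ • d.2 = -(D d.1) := by
        rw [eq_neg_iff_add_eq_zero, add_comm]
        exact hPd2.symm
      calc d.2 = σ • σ⁻¹ • d.2 := by
            rw [smul_smul, mul_inv_cancel₀ (ne_of_gt hσ), one_smul]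
        _ = σ • (-(D d.1)) := by rw [h1]
        _ = -(σ • D d.1) := by rw [smul_neg]
    have hipd : ip d (P d) = ⟪d.1, b⟫_ℝ := by
      rw [hPd, hip]
      rw [inner_zero_right]
      ring
    have hib : ⟪d.1, b⟫_ℝ = τ⁻¹ * ‖d.1‖ ^ 2 - σ * ‖D d.1‖ ^ 2 := by
      rw [hPd1]
      rw [inner_add_right, real_inner_smul_right, hadj, hd2', inner_neg_right,
        real_inner_smul_right, real_inner_self_eq_norm_sq, real_inner_self_eq_norm_sq]
      ring
    have hlow : m * ‖d.1‖ ^ 2 ≤ ⟪d.1, b⟫_ℝ := by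
      rw [hib, hmdef]
      have hDle : ‖D d.1‖ ≤ ‖D‖ * ‖d.1‖ := D.le_opNorm d.1
      have hinv : τ⁻¹ = 1 / τ := by rw [inv_eq_one_div]
      rw [hinv]
      have hsq : ‖D d.1‖ ^ 2 ≤ (‖D‖ * ‖d.1‖) ^ 2 := by
        apply pow_le_pow_left₀ (norm_nonneg _) hDle
      nlinarith [hsq, hσ.le]
    have hup : ⟪d.1, b⟫_ℝ ≤ ‖d.1‖ * ‖b‖ := real_inner_le_norm d.1 b
    have hQdd_le : ip d (P d) ≤ ‖b‖ ^ 2 / m := by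
      rw [hipd]
      rcases eq_or_lt_of_le (norm_nonneg d.1) with h0 | h0
      · have hd10 : d.1 = 0 := by
          rw [← norm_eq_zero]; exact h0.symm
        rw [hd10, inner_zero_left]
        positivity
      · have h1 : m * ‖d.1‖ ≤ ‖b‖ := by
          have h2 : m * ‖d.1‖ ^ 2 ≤ ‖d.1‖ * ‖b‖ := hlow.trans hup
          nlinarith
        calc ⟪d.1, b⟫_ℝ ≤ ‖d.1‖ * ‖b‖ := hup
          _ ≤ (‖b‖ / m) * ‖b‖ := by
              apply mul_le_mul_of_nonneg_right _ (norm_nonneg b)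
              rw [le_div_iff₀ hm0]
              linarith
          _ = ‖b‖ ^ 2 / m := by ring
    rw [hexp_sub (z - w) d]
    have hκQ : κ * ip d (P d) ≤ ‖b‖ ^ 2 / β := by
      calc κ * ip d (P d) ≤ κ * (‖b‖ ^ 2 / m) :=
            mul_le_mul_of_nonneg_left hQdd_le hκpos.le
        _ = ‖b‖ ^ 2 / β := by
            rw [hκm]
            field_simp
    have eβ : ‖b‖ ^ 2 / β = 1 / β * ‖b‖ ^ 2 := by ring
    have hfin : 2 * (κ * ip d (P d)) ≤ 2 * ip (z - w) (P d) := by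
      linarith [hQed_ge, hκQ, eβ]
    nlinarith [hfin]
  -- Part 4
  have part4 : ∀ T₁ : X × Y → X × Y, (∀ w, P w - P (T₁ w) ∈ A (T₁ w)) →
      AveragedWrt ip P (1 / δ) (fun z => T₁ (z - Pinv (B z))) := by
    intro T₁ hT₁ z w
    dsimp only
    have h1 := part2 T₁ hT₁ (z - Pinv (B z)) (w - Pinv (B w))
    have h2 := part3 z w
    dsimp only at h2
    rw [show ((1:ℝ) - 1 / 2) / (1 / 2) = 1 from by norm_num] at h1
    have hκne : (2 : ℝ) * κ ≠ 0 := by positivity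
    have hcoef : ((1:ℝ) - 1 / (2 * κ)) / (1 / (2 * κ)) = 2 * κ - 1 := by
      field_simp
    rw [hcoef] at h2
    set z' := z - Pinv (B z) with hz'def
    set w' := w - Pinv (B w) with hw'def
    set aa : X × Y := (z - z') - (w - w') with haadef
    set bb : X × Y := (z' - T₁ z') - (w' - T₁ w') with hbbdef
    have hab : (z - T₁ z') - (w - T₁ w') = aa + bb := by
      rw [haadef, hbbdef]; abel
    rw [hab]
    set t : ℝ := 2 * κ - 1 with htdef
    have ht : 0 < t := by rw [htdef]; linarith
    have psd : 0 ≤ ip (t • aa - bb) (P (t • aa - bb)) := hQpos _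
    have hexp3 := hexp_sq t aa bb
    rw [hexp3] at psd
    have hexpS := hexp_add aa bb
    have hδ1 : (1:ℝ) < δ := by
      rw [hδ]
      have h3 : 1 / (2 * κ) < 1 := by
        rw [div_lt_one (by linarith : (0:ℝ) < 2 * κ)]
        linarith
      linarith
    have hδne : δ ≠ 0 := by linarith
    have hδcoef : ((1:ℝ) - 1 / δ) / (1 / δ) = δ - 1 := by field_simp
    rw [hδcoef]
    have hδt : (δ - 1) * (t + 1) = t := by
      rw [hδ, htdef]
      field_simp
      ring
    have hmain : (δ - 1) * ip (aa + bb) (P (aa + bb)) ≤ t * ip aa (P aa) + ip bb (P bb) := by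
      have h5 : (t + 1) * ((δ - 1) * ip (aa + bb) (P (aa + bb)))
          = t * ip (aa + bb) (P (aa + bb)) := by
        rw [← mul_assoc, mul_comm (t + 1) (δ - 1), hδt]
      have h6 : t * ip (aa + bb) (P (aa + bb))
          ≤ (t + 1) * (t * ip aa (P aa) + ip bb (P bb)) := by
        rw [hexpS]
        nlinarith [psd]
      exact le_of_mul_le_mul_left (by rw [h5]; exact h6) (by linarith : (0:ℝ) < t + 1)
    linarith
  -- Part 1
  refine ⟨?_, part2, part3, part4⟩
  intro xk yk xt1 yt1 hprox_y hprox_x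
  rw [hA]
  have hu : τ⁻¹ • ((xk - τ • fgrad xk -
      τ • (ContinuousLinearMap.adjoint D) ((2 : ℝ) • yt1 - yk)) - xt1) ∈ subdiff g xt1 :=
    prox_subdiff g hg_proper hg_bot hg_conv hτ hprox_x
  have hv : σ⁻¹ • ((yk + σ • D xk) - yt1) ∈ subdiff (fenchel h) yt1 :=
    prox_subdiff (fenchel h) hF_proper hF_bot hF_conv hσ hprox_y
  refine ⟨_, hu, _, hv, ?_⟩
  rw [hP, hP, hB]
  dsimp only
  rw [Prod.ext_iff]
  constructor
  · simp only [Prod.fst_sub, Prod.snd_sub, map_sub, map_smul, smul_sub, smul_add]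
    match_scalars <;> field_simp <;> norm_num
  · simp only [Prod.fst_sub, Prod.snd_sub, map_sub, map_smul, smul_sub, smul_add]
    match_scalars <;> field_simp <;> norm_num
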